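/- arXiv:2402.04071 — 5 statements merged into one kernel-verified Lean document; each statement's English description precedes it below -/
import Mathlib

section
/- Let X, Y be n×n complex Hermitian matrices with X positive definite. Then |det(X + iY)| ≥ det(X) · det(1 + Y²/‖X‖²)^{1/2}, where ‖X‖ is the operator norm. -/
open Matrix
open scoped ComplexOrder

set_option linter.unusedSectionVars false
set_option maxHeartbeats 1000000

section aux

variable {m : Type*} [Fintype m] [DecidableEq m]

lemma my_psd_smul {M : Matrix m m ℂ} (hM : M.PosSemidef) {r : ℝ} (hr : 0 ≤ r) :
    ((r : ℂ) • M).PosSemidef := by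
  refine PosSemidef.of_dotProduct_mulVec_nonneg ?_ fun x => ?_
  · show ((r:ℂ) • M)ᴴ = _
    rw [conjTranspose_smul, hM.1.eq, Complex.star_def, Complex.conj_ofReal]
  · rw [smul_mulVec, dotProduct_smul, smul_eq_mul]
    exact mul_nonneg (by exact_mod_cast hr) (hM.dotProduct_mulVec_nonneg x)

lemma my_det_psd {M : Matrix m m ℂ} (hM : M.PosSemidef) :
    M.det = ((∏ i, hM.1.eigenvalues i : ℝ) : ℂ) := by
  rw [hM.1.det_eq_prod_eigenvalues]; push_cast; rfl


lemma my_one_le_det_one_add {P : Matrix m m ℂ} (hP : P.PosSemidef) :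
    (1 + P).det = ((∏ i, (1 + hP.1.eigenvalues i) : ℝ) : ℂ) ∧
      1 ≤ ∏ i, (1 + hP.1.eigenvalues i) := by
  constructor
  · set U : Matrix m m ℂ := (hP.1.eigenvectorUnitary : Matrix m m ℂ)
    have hU : U * star U = 1 := Unitary.coe_mul_star_self _
    have h1 : (1 : Matrix m m ℂ) + P
        = U * (1 + diagonal (RCLike.ofReal ∘ hP.1.eigenvalues)) * star U := by
      conv_lhs => rw [hP.1.spectral_theorem, Unitary.conjStarAlgAut_apply]
      rw [mul_add, add_mul, mul_one, hU]
    rw [h1, det_mul_right_comm, hU, one_mul]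
    have h2 : (1 : Matrix m m ℂ) + diagonal (RCLike.ofReal ∘ hP.1.eigenvalues)
        = diagonal (fun i => (1 : ℂ) + (hP.1.eigenvalues i : ℂ)) := by
      rw [← diagonal_one, diagonal_add]
      rfl
    rw [h2, det_diagonal]
    push_cast
    rfl
  · have h := Finset.prod_le_prod (s := Finset.univ) (f := fun _ : m => (1:ℝ))
      (g := fun i => 1 + hP.1.eigenvalues i) (fun i _ => zero_le_one)
      (fun i _ => by simpa using hP.eigenvalues_nonneg i)
    simpa using h

open scoped MatrixOrder in
lemma my_sqrt {A : Matrix m m ℂ} (hA : A.PosSemidef) : ∃ S : Matrix m m ℂ, S * S = A ∧ S.IsHermitian :=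
  ⟨CFC.sqrt A, CFC.sqrt_mul_sqrt_self A hA.nonneg, (CFC.sqrt_nonneg A).posSemidef.1⟩

lemma my_det_mono {A B : Matrix m m ℂ} (hA : A.PosDef) (hD : (B - A).PosSemidef) :
    A.det.re ≤ B.det.re := by
  obtain ⟨S, hSS, hSh⟩ := my_sqrt hA.posSemidef
  have hAdet : 0 < A.det := hA.det_pos
  have him : A.det.im = 0 := ((Complex.lt_def.1 hAdet).2).symm.trans Complex.zero_im
  have hre : 0 < A.det.re := by simpa using (Complex.lt_def.1 hAdet).1
  have hSdetu : IsUnit S.det := by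
    have : S.det * S.det = A.det := by rw [← det_mul, hSS]
    refine isUnit_iff_ne_zero.2 fun h => ?_
    rw [h, mul_zero] at this
    exact hAdet.ne' this.symm
  have hST : S * S⁻¹ = 1 := mul_nonsing_inv S hSdetu
  have hTS : S⁻¹ * S = 1 := nonsing_inv_mul S hSdetu
  have hTh : (S⁻¹)ᴴ = S⁻¹ := (hSh.inv).eq
  set P : Matrix m m ℂ := S⁻¹ * (B - A) * S⁻¹ with hPdef
  have hPpsd : P.PosSemidef := by
    have := hD.conjTranspose_mul_mul_same S⁻¹
    rwa [hTh] at this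
  have hB : B = S * (1 + P) * S := by
    rw [mul_add, mul_one, add_mul, hSS, hPdef]
    have : S * (S⁻¹ * (B - A) * S⁻¹) * S = (S * S⁻¹) * (B - A) * (S⁻¹ * S) := by
      simp only [Matrix.mul_assoc]
    rw [this, hST, hTS, one_mul, mul_one, add_sub_cancel]
  obtain ⟨hdet1, hle1⟩ := my_one_le_det_one_add hPpsd
  have hBdet : B.det = A.det * (1 + P).det := by
    rw [hB, det_mul, det_mul, mul_right_comm, ← det_mul, hSS]
  have h1 : B.det.re = A.det.re * ∏ i, (1 + hPpsd.1.eigenvalues i) := by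
    rw [hBdet, hdet1, Complex.mul_re, him, Complex.ofReal_re, Complex.ofReal_im]
    ring
  rw [h1]
  nlinarith [hre, hle1]

lemma my_herm_quad_real {m : Type*} [Fintype m] {X : Matrix m m ℂ} (hX : X.IsHermitian)
    (x : m → ℂ) : star (star x ⬝ᵥ (X *ᵥ x)) = star x ⬝ᵥ (X *ᵥ x) := by
  conv_lhs => rw [← star_dotProduct_star, star_star, star_mulVec, hX.eq,
    ← dotProduct_mulVec]

lemma my_opnorm_bound {n : ℕ} {X : Matrix (Fin n) (Fin n) ℂ} (hX : X.IsHermitian) :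
    ((((‖toEuclideanCLM (𝕜 := ℂ) X‖ : ℝ)) : ℂ) • (1 : Matrix (Fin n) (Fin n) ℂ) - X).PosSemidef := by
  set c : ℝ := ‖toEuclideanCLM (𝕜 := ℂ) X‖ with hc
  refine PosSemidef.of_dotProduct_mulVec_nonneg ?_ fun x => ?_
  · show _ᴴ = _
    rw [conjTranspose_sub, conjTranspose_smul, conjTranspose_one, hX.eq, Complex.star_def,
      Complex.conj_ofReal]
  · have hx : ((c:ℂ) • (1:Matrix (Fin n) (Fin n) ℂ) - X) *ᵥ x = (c:ℂ) • x - X *ᵥ x := by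
      rw [sub_mulVec, smul_mulVec, one_mulVec]
    rw [hx, dotProduct_sub, dotProduct_smul]
    set v : EuclideanSpace ℂ (Fin n) := WithLp.toLp 2 x with hv
    set z : ℂ := star x ⬝ᵥ (X *ᵥ x) with hz
    have h1 : z = inner ℂ v (toEuclideanCLM (𝕜 := ℂ) X v) := by
      rw [hz, hv, toEuclideanCLM_toLp, EuclideanSpace.inner_toLp_toLp, dotProduct_comm]
    have h2 : star x ⬝ᵥ x = ((‖v‖ : ℂ)) ^ 2 := by
      have : star x ⬝ᵥ x = (inner ℂ v v : ℂ) := by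
        rw [hv, EuclideanSpace.inner_toLp_toLp, dotProduct_comm]
      rw [this, inner_self_eq_norm_sq_to_K]
      norm_cast
    have hzre : z = (z.re : ℂ) :=
      (Complex.conj_eq_iff_re.1 (my_herm_quad_real hX x)).symm ▸ rfl
    have hbound : z.re ≤ c * ‖v‖ ^ 2 := by
      have hb1 : z.re ≤ ‖z‖ := Complex.re_le_norm z
      have hb2 : ‖z‖ ≤ ‖v‖ * ‖toEuclideanCLM (𝕜 := ℂ) X v‖ := by
        rw [h1]
        exact norm_inner_le_norm v _
      have hb3 : ‖toEuclideanCLM (𝕜 := ℂ) X v‖ ≤ c * ‖v‖ :=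
        (toEuclideanCLM (𝕜 := ℂ) X).le_opNorm v
      nlinarith [norm_nonneg v]
    rw [h2, smul_eq_mul]
    have : (c:ℂ) * ((‖v‖:ℂ))^2 - z = ((c * ‖v‖^2 - z.re : ℝ) : ℂ) := by
      conv_lhs => rw [hzre]
      push_cast
      ring
    rw [this]
    rw [Complex.zero_le_real]
    linarith

variable {m : Type*} [Fintype m] [DecidableEq m]

lemma my_real_smul {r : ℝ} {M : Matrix m m ℂ} : r • M = ((r : ℂ)) • M := by
  ext i j
  simp [Matrix.smul_apply, Complex.real_smul]

lemma my_det_re_pos {A : Matrix m m ℂ} (hA : A.PosDef) :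
    A.det = ((A.det.re : ℝ) : ℂ) ∧ 0 < A.det.re := by
  have hAdet : 0 < A.det := hA.det_pos
  have him : A.det.im = 0 := ((Complex.lt_def.1 hAdet).2).symm.trans Complex.zero_im
  have hre : 0 < A.det.re := by simpa using (Complex.lt_def.1 hAdet).1
  exact ⟨(Complex.ext_iff.2 ⟨by simp, by simp [him]⟩), hre⟩
end aux

/-- For Hermitian `X, Y` with `X` positive definite,
`|det(X + iY)| ≥ det X · det(1 + Y²/‖X‖²)^{1/2}`, with `‖X‖` the operator norm. -/
theorem stmt_0 (n : ℕ) (X Y : Matrix (Fin n) (Fin n) ℂ)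
    (hX : X.IsHermitian) (hY : Y.IsHermitian) (hXpd : X.PosDef) :
    ‖(X + Complex.I • Y).det‖ ≥
      X.det.re *
        Real.sqrt ((1 + ((‖Matrix.toEuclideanCLM (𝕜 := ℂ) X‖ : ℝ) ^ 2)⁻¹ • (Y * Y)).det.re) := by
  rcases Nat.eq_zero_or_pos n with rfl | hn
  · simp only [det_isEmpty, Complex.one_re, Real.sqrt_one, mul_one, ge_iff_le]
    exact le_of_eq norm_one.symm
  set c : ℝ := ‖toEuclideanCLM (𝕜 := ℂ) X‖ with hc
  -- c is positive
  have hXne : X ≠ 0 := by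
    intro h0
    have hx : (Pi.single (⟨0, hn⟩ : Fin n) 1 : Fin n → ℂ) ≠ 0 := by
      intro h
      have := congrFun h ⟨0, hn⟩
      simp at this
    have h2 := hXpd.dotProduct_mulVec_pos hx
    rw [h0] at h2
    simp at h2
  have hcpos : 0 < c := by
    rw [hc, norm_pos_iff]
    intro h
    apply hXne
    have := congrArg (toEuclideanCLM (𝕜 := ℂ) (n := Fin n)).symm h
    simpa using this
  have hcne : (c : ℂ) ≠ 0 := by exact_mod_cast hcpos.ne'
  -- square root of X
  obtain ⟨S, hSS, hSh⟩ := my_sqrt hXpd.posSemidef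
  have hXdetpos : 0 < X.det := hXpd.det_pos
  have hSdetu : IsUnit S.det := by
    have h : S.det * S.det = X.det := by rw [← det_mul, hSS]
    refine isUnit_iff_ne_zero.2 fun h0 => ?_
    rw [h0, mul_zero] at h
    exact hXdetpos.ne' h.symm
  set T : Matrix (Fin n) (Fin n) ℂ := S⁻¹ with hTdef
  have hST : S * T = 1 := mul_nonsing_inv S hSdetu
  have hTS : T * S = 1 := nonsing_inv_mul S hSdetu
  have hTh : Tᴴ = T := (hSh.inv).eq
  have hTT : T * T = X⁻¹ := by rw [hTdef, ← Matrix.mul_inv_rev, hSS]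
  set Z : Matrix (Fin n) (Fin n) ℂ := T * Y * T with hZdef
  have hZh : Z.IsHermitian := by
    show Zᴴ = Z
    rw [hZdef, conjTranspose_mul, conjTranspose_mul, hTh, hY.eq]
    simp only [Matrix.mul_assoc]
  -- the key positive semidefinite matrix K = X⁻¹ - c⁻¹ • 1
  set K : Matrix (Fin n) (Fin n) ℂ := X⁻¹ - (c : ℂ)⁻¹ • 1 with hKdef
  have hK : K.PosSemidef := by
    have hL := my_opnorm_bound hX
    have hL2 := hL.conjTranspose_mul_mul_same T
    rw [hTh] at hL2
    have he : T * ((c : ℂ) • 1 - X) * T = (c : ℂ) • X⁻¹ - 1 := by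
      rw [mul_sub, sub_mul, Matrix.mul_smul, mul_one, Matrix.smul_mul, hTT]
      congr 1
      rw [show T * X * T = T * (S * S) * T by rw [hSS],
        show T * (S * S) * T = (T * S) * (S * T) by simp only [Matrix.mul_assoc], hTS, hST,
        one_mul]
    rw [he] at hL2
    have he2 : K = ((c⁻¹ : ℝ) : ℂ) • ((c : ℂ) • X⁻¹ - 1) := by
      rw [hKdef, Complex.ofReal_inv, smul_sub, smul_smul, inv_mul_cancel₀ hcne, one_smul]
    rw [he2]
    exact my_psd_smul hL2 (inv_nonneg.2 hcpos.le)
  -- chain of matrices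
  set A1 : Matrix (Fin n) (Fin n) ℂ := 1 + (c : ℂ)⁻¹ • (T * Y * Y * T) with hA1def
  set A2 : Matrix (Fin n) (Fin n) ℂ := 1 + (c : ℂ)⁻¹ • (Y * X⁻¹ * Y) with hA2def
  set A3 : Matrix (Fin n) (Fin n) ℂ := 1 + ((c : ℂ) * (c : ℂ))⁻¹ • (Y * Y) with hA3def
  have hTYYT : (T * Y * Y * T).PosSemidef := by
    have h := posSemidef_conjTranspose_mul_self (Y * T)
    rw [conjTranspose_mul, hTh, hY.eq] at h
    have e : T * Y * (Y * T) = T * Y * Y * T := by simp only [Matrix.mul_assoc]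
    rwa [e] at h
  have hYY : (Y * Y).PosSemidef := by
    have h := posSemidef_conjTranspose_mul_self Y
    rwa [hY.eq] at h
  have hYXY : (Y * K * Y).PosSemidef := by
    have h := hK.conjTranspose_mul_mul_same Y
    rwa [hY.eq] at h
  have hA1pd : A1.PosDef := by
    rw [hA1def]
    refine Matrix.PosDef.add_posSemidef Matrix.PosDef.one ?_
    have := my_psd_smul hTYYT (inv_nonneg.2 hcpos.le)
    rwa [Complex.ofReal_inv] at this
  have hA3pd : A3.PosDef := by
    rw [hA3def]
    refine Matrix.PosDef.add_posSemidef Matrix.PosDef.one ?_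
    have := my_psd_smul hYY (r := (c * c)⁻¹) (by positivity)
    rwa [Complex.ofReal_inv, Complex.ofReal_mul] at this
  -- inequality 1 : A1.det.re ≤ (1 + Z * Z).det.re
  have hZZpsd : (Z * Z).PosSemidef := by
    have h := posSemidef_conjTranspose_mul_self Z
    rwa [hZh.eq] at h
  have hWpd : (1 + Z * Z).PosDef := Matrix.PosDef.add_posSemidef Matrix.PosDef.one hZZpsd
  have hdiff1 : (1 + Z * Z) - A1 = (T * Y) * K * (Y * T) := by
    have eK : (T * Y) * K * (Y * T) = T * Y * X⁻¹ * (Y * T) - (c : ℂ)⁻¹ • (T * Y * (Y * T)) := by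
      rw [hKdef, mul_sub, sub_mul, Matrix.mul_smul, mul_one, Matrix.smul_mul]
    have eZ : Z * Z = T * Y * X⁻¹ * (Y * T) := by
      rw [hZdef, ← hTT]
      simp only [Matrix.mul_assoc]
    have eN : T * Y * Y * T = T * Y * (Y * T) := by simp only [Matrix.mul_assoc]
    rw [hA1def, eK, eZ, eN]
    abel
  have hineq1 : A1.det.re ≤ (1 + Z * Z).det.re := by
    apply my_det_mono hA1pd
    rw [hdiff1]
    have h := hK.conjTranspose_mul_mul_same (Y * T)
    rwa [conjTranspose_mul, hTh, hY.eq] at h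
  -- equality : A1.det = A2.det
  have heq12 : A1.det = A2.det := by
    have e1 : A1 = 1 + T * ((c : ℂ)⁻¹ • (Y * (Y * T))) := by
      rw [hA1def, Matrix.mul_smul]
      congr 2
      simp only [Matrix.mul_assoc]
    have e2 : ((c : ℂ)⁻¹ • (Y * (Y * T))) * T = (c : ℂ)⁻¹ • (Y * (Y * X⁻¹)) := by
      rw [Matrix.smul_mul]
      congr 1
      simp only [Matrix.mul_assoc, hTT]
    have e3 : (1 : Matrix (Fin n) (Fin n) ℂ) + (c : ℂ)⁻¹ • (Y * (Y * X⁻¹))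
        = 1 + Y * ((c : ℂ)⁻¹ • (Y * X⁻¹)) := by
      rw [Matrix.mul_smul]
    have e4 : ((c : ℂ)⁻¹ • (Y * X⁻¹)) * Y = (c : ℂ)⁻¹ • (Y * X⁻¹ * Y) := by
      rw [Matrix.smul_mul]
    rw [e1, det_one_add_mul_comm, e2, e3, det_one_add_mul_comm, e4, hA2def]
  -- inequality 2 : A3.det.re ≤ A2.det.re
  have hdiff2 : A2 - A3 = (c : ℂ)⁻¹ • (Y * K * Y) := by
    have eK : Y * K * Y = Y * X⁻¹ * Y - (c : ℂ)⁻¹ • (Y * Y) := by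
      rw [hKdef, mul_sub, sub_mul, Matrix.mul_smul, mul_one, Matrix.smul_mul]
    rw [hA2def, hA3def, eK, smul_sub, smul_smul, ← mul_inv]
    abel
  have hineq2 : A3.det.re ≤ A2.det.re := by
    apply my_det_mono hA3pd
    rw [hdiff2, ← Complex.ofReal_inv]
    exact my_psd_smul hYXY (inv_nonneg.2 hcpos.le)
  -- factorization of X + iY
  have hSZS : S * Z * S = Y := by
    rw [hZdef, show S * (T * Y * T) * S = (S * T) * Y * (T * S) by simp only [Matrix.mul_assoc],
      hST, hTS, one_mul, mul_one]
  have hfac : X + Complex.I • Y = S * (1 + Complex.I • Z) * S := by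
    rw [mul_add, mul_one, add_mul, hSS, Matrix.mul_smul, Matrix.smul_mul, hSZS]
  have hdet : (X + Complex.I • Y).det = X.det * (1 + Complex.I • Z).det := by
    rw [hfac, det_mul, det_mul, mul_right_comm, ← det_mul, hSS]
  obtain ⟨hXdeteq, hXdetrepos⟩ := my_det_re_pos hXpd
  -- |det (1 + iZ)| = sqrt ((1 + Z*Z).det.re)
  obtain ⟨hWdeteq, hWdetrepos⟩ := my_det_re_pos hWpd
  have hconj : (1 + Complex.I • Z)ᴴ = 1 - Complex.I • Z := by
    rw [conjTranspose_add, conjTranspose_one, conjTranspose_smul, hZh.eq, Complex.star_def,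
      Complex.conj_I, neg_smul, ← sub_eq_add_neg]
  have hmul : (1 + Complex.I • Z) * (1 - Complex.I • Z) = 1 + Z * Z := by
    have h1 : (1 + Complex.I • Z) * (1 - Complex.I • Z)
        = 1 - (Complex.I • Z) * (Complex.I • Z) := by
      rw [mul_sub, mul_one, add_mul, one_mul]
      abel
    rw [h1, Matrix.smul_mul, Matrix.mul_smul, smul_smul, Complex.I_mul_I, neg_one_smul,
      sub_neg_eq_add]
  have habs : ‖(1 + Complex.I • Z).det‖ = Real.sqrt ((1 + Z * Z).det.re) := by
    have h1 : (1 + Complex.I • Z).det * (starRingEnd ℂ) ((1 + Complex.I • Z).det)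
        = (1 + Z * Z).det := by
      rw [show (starRingEnd ℂ) ((1 + Complex.I • Z).det) = ((1 + Complex.I • Z)ᴴ).det from
        (det_conjTranspose _).symm, hconj, ← det_mul, hmul]
    have h2 : (Complex.normSq ((1 + Complex.I • Z).det) : ℂ) = ((1 + Z * Z).det.re : ℂ) := by
      rw [← Complex.mul_conj, h1]
      exact hWdeteq
    have h3 : Complex.normSq ((1 + Complex.I • Z).det) = (1 + Z * Z).det.re :=
      Complex.ofReal_injective h2
    rw [Complex.norm_def, h3]
  -- assemble
  have hLHS : ‖(X + Complex.I • Y).det‖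
      = X.det.re * Real.sqrt ((1 + Z * Z).det.re) := by
    rw [hdet, norm_mul, ← habs]
    congr 1
    rw [hXdeteq, Complex.norm_real, Real.norm_eq_abs, abs_of_pos hXdetrepos, Complex.ofReal_re]
  -- the matrix in the statement equals A3
  have hstmt : (1 + ((c : ℝ) ^ 2)⁻¹ • (Y * Y)) = A3 := by
    rw [hA3def, my_real_smul]
    congr 2
    push_cast
    ring
  rw [ge_iff_le, hstmt, hLHS]
  apply mul_le_mul_of_nonneg_left _ hXdetrepos.le
  apply Real.sqrt_le_sqrt
  calc A3.det.re ≤ A2.det.re := hineq2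
    _ = A1.det.re := by rw [heq12]
    _ ≤ (1 + Z * Z).det.re := hineq1
end

section
/- Let A be a positive semi-definite complex block matrix with diagonal blocks A_{jj}. Then det A ≤ ∏_j det A_{jj} (Fischer's inequality). -/
open Matrix
open scoped ComplexOrder

namespace FischerAux

variable {n : Type*} [Fintype n] [DecidableEq n]

open scoped MatrixOrder

/-- The determinant of a Hermitian complex matrix is real. -/
lemma det_eq_ofReal_re {M : Matrix n n ℂ} (h : M.IsHermitian) :
    M.det = ((M.det.re : ℝ) : ℂ) := by
  have h1 : M.det = ((∏ i, h.eigenvalues i : ℝ) : ℂ) := by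
    rw [h.det_eq_prod_eigenvalues]
    push_cast
    rfl
  rw [h1, Complex.ofReal_re]

lemma det_re_nonneg {M : Matrix n n ℂ} (hM : M.PosSemidef) : 0 ≤ M.det.re := by
  have h1 : M.det = ((∏ i, hM.1.eigenvalues i : ℝ) : ℂ) := by
    rw [hM.1.det_eq_prod_eigenvalues]; push_cast; rfl
  rw [h1, Complex.ofReal_re]
  exact Finset.prod_nonneg fun i _ => hM.eigenvalues_nonneg i

lemma det_one_add_re {T : Matrix n n ℂ} (hT : T.PosSemidef) :
    1 ≤ ((1 : Matrix n n ℂ) + T).det.re := by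
  have hH := hT.1
  set U : Matrix n n ℂ := (hH.eigenvectorUnitary : Matrix n n ℂ) with hUdef
  set D : Matrix n n ℂ := diagonal (RCLike.ofReal ∘ hH.eigenvalues) with hDdef
  have hU : U * star U = 1 := (Matrix.mem_unitaryGroup_iff).mp hH.eigenvectorUnitary.2
  have hU' : star U * U = 1 := (Matrix.mem_unitaryGroup_iff').mp hH.eigenvectorUnitary.2
  have key : (1 : Matrix n n ℂ) + T = U * (1 + D) * star U := by
    rw [Matrix.mul_add, Matrix.add_mul, Matrix.mul_one, hU]
    congr 1
    exact hH.spectral_theorem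
  have hdet : ((1 : Matrix n n ℂ) + T).det = (1 + D).det := by
    rw [key, det_mul, det_mul]
    have : U.det * (1 + D).det * (star U).det = (star U * U).det * (1 + D).det := by
      rw [det_mul]; ring
    rw [this, hU', det_one, one_mul]
  have hdiag : ((1 : Matrix n n ℂ) + D).det
      = ((∏ i, (1 + hH.eigenvalues i) : ℝ) : ℂ) := by
    rw [hDdef, ← Matrix.diagonal_one, Matrix.diagonal_add, Matrix.det_diagonal]
    push_cast
    rfl
  rw [hdet, hdiag, Complex.ofReal_re]
  calc (1:ℝ) = ∏ _i : n, 1 := by simp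
  _ ≤ ∏ i, (1 + hH.eigenvalues i) := Finset.prod_le_prod (fun i _ => zero_le_one)
      (fun i _ => le_add_of_nonneg_right (hT.eigenvalues_nonneg i))

/-- Determinant monotonicity: adding a PSD matrix to a PSD matrix increases the determinant. -/
lemma det_re_add_le {X S : Matrix n n ℂ} (hX : X.PosSemidef) (hS : S.PosSemidef) :
    X.det.re ≤ (X + S).det.re := by
  by_cases hd : X.det = 0
  · rw [hd]
    simpa using det_re_nonneg (hX.add hS)
  · set R : Matrix n n ℂ := CFC.sqrt X with hRdef
    have hR : R.PosSemidef := Matrix.nonneg_iff_posSemidef.mp (CFC.sqrt_nonneg X)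
    have hRR : R * R = X := CFC.sqrt_mul_sqrt_self X hX.nonneg
    have hRdet : IsUnit R.det := by
      rw [isUnit_iff_ne_zero]
      intro h
      exact hd (by rw [← hRR, det_mul, h, mul_zero])
    haveI : Invertible R := R.invertibleOfIsUnitDet hRdet
    have hRinvH : R⁻¹.IsHermitian := hR.1.inv
    set T : Matrix n n ℂ := R⁻¹ * S * R⁻¹ with hTdef
    have hT : T.PosSemidef := by
      have := hS.conjTranspose_mul_mul_same (B := R⁻¹)
      rwa [hRinvH.eq] at this
    have key : X + S = R * (1 + T) * R := by
      rw [Matrix.mul_add, Matrix.add_mul, Matrix.mul_one, hRR, hTdef]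
      congr 1
      rw [← Matrix.mul_assoc, ← Matrix.mul_assoc, Matrix.mul_inv_of_invertible, Matrix.one_mul,
        Matrix.mul_assoc, Matrix.inv_mul_of_invertible, Matrix.mul_one]
    have hdet : (X + S).det = X.det * (1 + T).det := by
      rw [key, det_mul, det_mul, ← hRR, det_mul]; ring
    have h1T : (1 + T).det = (((1 + T).det.re : ℝ) : ℂ) := det_eq_ofReal_re (isHermitian_one.add hT.1)
    have hXr : X.det = ((X.det.re : ℝ) : ℂ) := det_eq_ofReal_re hX.1
    have : (X + S).det = ((X.det.re * (1 + T).det.re : ℝ) : ℂ) := by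
      conv_lhs => rw [hdet, hXr, h1T]
      norm_cast
    rw [this, Complex.ofReal_re]
    calc X.det.re = X.det.re * 1 := by ring
    _ ≤ X.det.re * (1 + T).det.re :=
        mul_le_mul_of_nonneg_left (det_one_add_re hT) (det_re_nonneg hX)

/-- PSD with nonzero determinant is positive definite. -/
lemma posDef_of_det_ne_zero {M : Matrix n n ℂ} (hM : M.PosSemidef) (h : M.det ≠ 0) :
    M.PosDef := by
  set R : Matrix n n ℂ := CFC.sqrt M with hRdef
  have hR : R.PosSemidef := Matrix.nonneg_iff_posSemidef.mp (CFC.sqrt_nonneg M)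
  have hRR : R * R = M := CFC.sqrt_mul_sqrt_self M hM.nonneg
  have hRdet : IsUnit R.det := by
    rw [isUnit_iff_ne_zero]
    intro h'
    exact h (by rw [← hRR, det_mul, h', mul_zero])
  refine Matrix.PosDef.of_dotProduct_mulVec_pos hM.1 fun x hx => ?_
  have hRx : R *ᵥ x ≠ 0 := by
    intro h'
    exact hx ((Matrix.mulVec_injective_iff_isUnit.mpr (isUnit_iff_isUnit_det _ |>.mpr hRdet)).eq_iff'
      (by simp) |>.mp h')
  have : star x ⬝ᵥ M *ᵥ x = star (R *ᵥ x) ⬝ᵥ (R *ᵥ x) := by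
    rw [← hRR, ← Matrix.mulVec_mulVec, Matrix.dotProduct_mulVec (star x), star_mulVec, hR.1.eq]
  rw [this]
  exact Matrix.dotProduct_star_self_pos_iff.mpr hRx


section Two
variable {p : Type*} [Fintype p] [DecidableEq p]

/-- Fischer's inequality for two blocks. -/
lemma fischer_two (A : Matrix (n ⊕ p) (n ⊕ p) ℂ) (hA : A.PosSemidef) :
    A.det.re ≤ (A.toBlocks₁₁).det.re * (A.toBlocks₂₂).det.re := by
  set B := A.toBlocks₁₁ with hBdef
  set C := A.toBlocks₁₂ with hCdef
  set D := A.toBlocks₂₂ with hDdef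
  have hC : A.toBlocks₂₁ = Cᴴ := by
    ext i j
    simpa [hCdef, toBlocks₂₁, toBlocks₁₂, conjTranspose_apply] using (hA.1.apply (Sum.inr i) (Sum.inl j)).symm
  have hAblocks : A = fromBlocks B C Cᴴ D := by
    rw [← hC, hBdef, hCdef, hDdef, fromBlocks_toBlocks]
  have hB : B.PosSemidef := hA.submatrix Sum.inl
  have hD : D.PosSemidef := hA.submatrix Sum.inr
  by_cases hdet : B.det = 0
  · -- B singular ⇒ A singular
    obtain ⟨v, hv, hBv⟩ := (Matrix.exists_mulVec_eq_zero_iff).mpr hdet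
    set w : n ⊕ p → ℂ := Sum.elim v 0 with hwdef
    have hw : w ≠ 0 := by
      intro h
      exact hv (by ext i; exact congr_fun h (Sum.inl i))
    have h1 : A *ᵥ w = Sum.elim (B *ᵥ v) (A.toBlocks₂₁ *ᵥ v) := by
      ext (i | i) <;>
        simp [hwdef, hBdef, Matrix.mulVec, dotProduct, Fintype.sum_sum_type, toBlocks₁₁, toBlocks₂₁, Matrix.of_apply]
    have hq : star w ⬝ᵥ A *ᵥ w = 0 := by
      rw [h1, hBv]
      simp [hwdef, dotProduct, Fintype.sum_sum_type]
    have hAw : A *ᵥ w = 0 := (hA.dotProduct_mulVec_zero_iff w).mp hq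
    have hAdet : A.det = 0 := (Matrix.exists_mulVec_eq_zero_iff).mp ⟨w, hw, hAw⟩
    rw [hAdet, hdet]
    simp
  · have hBpd : B.PosDef := posDef_of_det_ne_zero hB hdet
    haveI : Invertible B := B.invertibleOfIsUnitDet (isUnit_iff_ne_zero.mpr hdet)
    have hSchur : (D - Cᴴ * B⁻¹ * C).PosSemidef :=
      (Matrix.PosDef.fromBlocks₁₁ C D hBpd).mp (hAblocks ▸ hA)
    have hS' : (Cᴴ * B⁻¹ * C).PosSemidef := hBpd.inv.posSemidef.conjTranspose_mul_mul_same C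
    have hmono : (D - Cᴴ * B⁻¹ * C).det.re ≤ D.det.re := by
      have := det_re_add_le hSchur hS'
      rwa [sub_add_cancel] at this
    have hdetA : A.det = B.det * (D - Cᴴ * B⁻¹ * C).det := by
      rw [hAblocks, det_fromBlocks₁₁, invOf_eq_nonsing_inv]
    have hBr : B.det = ((B.det.re : ℝ) : ℂ) := det_eq_ofReal_re hB.1
    have hSr : (D - Cᴴ * B⁻¹ * C).det = (((D - Cᴴ * B⁻¹ * C).det.re : ℝ) : ℂ) :=
      det_eq_ofReal_re hSchur.1
    have hre : A.det.re = B.det.re * (D - Cᴴ * B⁻¹ * C).det.re := by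
      have : A.det = ((B.det.re * (D - Cᴴ * B⁻¹ * C).det.re : ℝ) : ℂ) := by
        conv_lhs => rw [hdetA, hBr, hSr]
        norm_cast
      rw [this, Complex.ofReal_re]
    rw [hre]
    exact mul_le_mul_of_nonneg_left hmono (det_re_nonneg hB)

end Two

/-- Split off the first block of a sigma type over `Fin (k+1)`. -/
def sigmaSuccEquiv (k : ℕ) (m : Fin (k + 1) → ℕ) :
    (Fin (m 0) ⊕ ((j : Fin k) × Fin (m j.succ))) ≃ ((j : Fin (k + 1)) × Fin (m j)) where
  toFun := Sum.elim (fun a => ⟨0, a⟩) (fun x => ⟨x.1.succ, x.2⟩)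
  invFun x := Fin.cases (motive := fun j => Fin (m j) → (Fin (m 0) ⊕ ((j : Fin k) × Fin (m j.succ))))
    (fun a => Sum.inl a) (fun j a => Sum.inr ⟨j, a⟩) x.1 x.2
  left_inv := by rintro (a | ⟨j, a⟩) <;> simp
  right_inv := by
    rintro ⟨j, a⟩
    induction j using Fin.cases <;> simp

lemma fischer_sigma (k : ℕ) : ∀ (m : Fin k → ℕ)
    (A : Matrix ((j : Fin k) × Fin (m j)) ((j : Fin k) × Fin (m j)) ℂ), A.PosSemidef →
    A.det.re ≤ ∏ j : Fin k, (Matrix.of fun a b : Fin (m j) => A ⟨j, a⟩ ⟨j, b⟩).det.re := by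
  induction k with
  | zero =>
    intro m A hA
    simp [Matrix.det_isEmpty]
  | succ k ih =>
    intro m A hA
    set e := sigmaSuccEquiv k m with hedef
    set A' := A.submatrix e e with hA'def
    have hA' : A'.PosSemidef := hA.submatrix e
    have hdet : A'.det = A.det := det_submatrix_equiv_self e A
    have h2 : A'.det.re ≤ (A'.toBlocks₁₁).det.re * (A'.toBlocks₂₂).det.re :=
      fischer_two A' hA'
    have hblock1 : A'.toBlocks₁₁ = (Matrix.of fun a b : Fin (m 0) => A ⟨0, a⟩ ⟨0, b⟩) := rfl
    have hrest : (A'.toBlocks₂₂).det.re ≤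
        ∏ j : Fin k, (Matrix.of fun a b : Fin (m j.succ) =>
          (A'.toBlocks₂₂) ⟨j, a⟩ ⟨j, b⟩).det.re := by
      exact ih (fun j => m j.succ) A'.toBlocks₂₂ (hA'.submatrix Sum.inr)
    have hprod : ∏ j : Fin (k+1), (Matrix.of fun a b : Fin (m j) => A ⟨j, a⟩ ⟨j, b⟩).det.re
        = (Matrix.of fun a b : Fin (m 0) => A ⟨0, a⟩ ⟨0, b⟩).det.re *
          ∏ j : Fin k, (Matrix.of fun a b : Fin (m j.succ) => A ⟨j.succ, a⟩ ⟨j.succ, b⟩).det.re :=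
      Fin.prod_univ_succ _
    rw [← hdet, hprod]
    refine h2.trans ?_
    rw [hblock1]
    refine mul_le_mul_of_nonneg_left ?_ (det_re_nonneg (hA.submatrix _))
    exact hrest

end FischerAux

/-- Fischer's inequality: for a positive semidefinite block matrix `A`,
`det A ≤ ∏ j det A_{jj}` (the dets are real since `A` and its diagonal blocks are PSD). -/
theorem stmt_1 (k : ℕ) (m : Fin k → ℕ)
    (A : Matrix ((j : Fin k) × Fin (m j)) ((j : Fin k) × Fin (m j)) ℂ)
    (hA : A.PosSemidef) :
    A.det.re ≤ ∏ j : Fin k, (Matrix.of fun a b : Fin (m j) => A ⟨j, a⟩ ⟨j, b⟩).det.re :=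
  FischerAux.fischer_sigma k m A hA
end

section
/- Let A ∈ M_n(ℂ) be invertible, U = (U_k, U_{n-k}) ∈ U(n) a unitary with U_k the first k columns, and B = U_{n-k}* A U_{n-k} invertible. Then U · diag(0, B^{-1}) · U* = A^{-1} − A^{-1} U_k (U_k* A^{-1} U_k)^{-1} U_k* A^{-1}. -/
open Matrix

/-- Resolvent of a compression: with `U = (U_k, U_l)` unitary, `B = U_lᴴ A U_l`,
`U · diag(0, B⁻¹) · Uᴴ = A⁻¹ − A⁻¹ U_k (U_kᴴ A⁻¹ U_k)⁻¹ U_kᴴ A⁻¹`. -/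
theorem stmt_2 (k l : ℕ)
    (A : Matrix (Fin (k + l)) (Fin (k + l)) ℂ)
    (U : Matrix (Fin (k + l)) (Fin k ⊕ Fin l) ℂ)
    (hU : Uᴴ * U = 1)
    (Uk : Matrix (Fin (k + l)) (Fin k) ℂ)
    (hUk : Uk = Matrix.of fun i a => U i (Sum.inl a))
    (Ul : Matrix (Fin (k + l)) (Fin l) ℂ)
    (hUl : Ul = Matrix.of fun i a => U i (Sum.inr a))
    (hA : IsUnit A.det)
    (hB : IsUnit (Ulᴴ * A * Ul).det)
    (hC : IsUnit (Ukᴴ * A⁻¹ * Uk).det) :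
    U * Matrix.fromBlocks (0 : Matrix (Fin k) (Fin k) ℂ) 0 0 (Ulᴴ * A * Ul)⁻¹ * Uᴴ
      = A⁻¹ - A⁻¹ * Uk * (Ukᴴ * A⁻¹ * Uk)⁻¹ * Ukᴴ * A⁻¹ := by
  -- U as a column-partitioned matrix
  have hUc : U = fromCols Uk Ul := by
    subst hUk hUl
    ext i j
    cases j <;> rfl
  have hUH : Uᴴ = fromRows Ukᴴ Ulᴴ := by
    rw [hUc, conjTranspose_fromCols_eq_fromRows_conjTranspose]
  -- orthonormality relations
  have hU' : Uᴴ * U = 1 := hU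
  rw [hUH, hUc, fromRows_mul_fromCols, ← fromBlocks_one] at hU'
  rw [fromBlocks_inj] at hU'
  obtain ⟨hkk, hkl, hlk, hll⟩ := hU'
  -- U * Uᴴ = 1
  have hUUH : U * Uᴴ = 1 :=
    (mul_eq_one_comm_of_equiv (finSumFinEquiv (m := k) (n := l)).symm).mpr hU
  have hP : Uk * Ukᴴ + Ul * Ulᴴ = 1 := by
    rw [← fromCols_mul_fromRows, ← hUc, ← hUH]; exact hUUH
  have hP' : Ul * Ulᴴ = 1 - Uk * Ukᴴ := by
    exact eq_sub_of_add_eq' hP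
  have hAA : A * A⁻¹ = 1 := mul_nonsing_inv _ hA
  have hC1 : (Ukᴴ * A⁻¹ * Uk) * (Ukᴴ * A⁻¹ * Uk)⁻¹ = 1 := mul_nonsing_inv _ hC
  have hC2 : (Ukᴴ * A⁻¹ * Uk)⁻¹ * (Ukᴴ * A⁻¹ * Uk) = 1 := nonsing_inv_mul _ hC
  set C := Ukᴴ * A⁻¹ * Uk with hCdef
  set B := Ulᴴ * A * Ul with hBdef
  set S := Ulᴴ * A⁻¹ * Ul - Ulᴴ * A⁻¹ * Uk * C⁻¹ * (Ukᴴ * A⁻¹ * Ul) with hSdef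
  -- Schur complement identity: B * S = 1
  have hBS : B * S = 1 := by
    have e1 : B * (Ulᴴ * A⁻¹ * Ul) = 1 - Ulᴴ * A * Uk * (Ukᴴ * A⁻¹ * Ul) := by
      calc B * (Ulᴴ * A⁻¹ * Ul)
          = Ulᴴ * A * ((Ul * Ulᴴ) * (A⁻¹ * Ul)) := by
            simp only [hBdef, Matrix.mul_assoc]
        _ = Ulᴴ * A * ((1 - Uk * Ukᴴ) * (A⁻¹ * Ul)) := by rw [hP']
        _ = Ulᴴ * (A * A⁻¹) * Ul - Ulᴴ * A * Uk * (Ukᴴ * A⁻¹ * Ul) := by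
            simp only [Matrix.sub_mul, Matrix.mul_sub, Matrix.one_mul, Matrix.mul_assoc]
        _ = 1 - Ulᴴ * A * Uk * (Ukᴴ * A⁻¹ * Ul) := by rw [hAA, Matrix.mul_one, hll]
    have e2 : B * (Ulᴴ * A⁻¹ * Uk) = - (Ulᴴ * A * Uk * C) := by
      calc B * (Ulᴴ * A⁻¹ * Uk)
          = Ulᴴ * A * ((Ul * Ulᴴ) * (A⁻¹ * Uk)) := by
            simp only [hBdef, Matrix.mul_assoc]
        _ = Ulᴴ * A * ((1 - Uk * Ukᴴ) * (A⁻¹ * Uk)) := by rw [hP']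
        _ = Ulᴴ * (A * A⁻¹) * Uk - Ulᴴ * A * Uk * (Ukᴴ * A⁻¹ * Uk) := by
            simp only [Matrix.sub_mul, Matrix.mul_sub, Matrix.one_mul, Matrix.mul_assoc]
        _ = - (Ulᴴ * A * Uk * C) := by
            rw [hAA, Matrix.mul_one, hlk, ← hCdef, zero_sub]
    calc B * S
        = B * (Ulᴴ * A⁻¹ * Ul) - B * (Ulᴴ * A⁻¹ * Uk) * (C⁻¹ * (Ukᴴ * A⁻¹ * Ul)) := by
          simp only [hSdef, Matrix.mul_sub, Matrix.mul_assoc]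
      _ = 1 - Ulᴴ * A * Uk * (Ukᴴ * A⁻¹ * Ul)
            + Ulᴴ * A * Uk * (C * C⁻¹) * (Ukᴴ * A⁻¹ * Ul) := by
          rw [e1, e2]
          simp only [Matrix.neg_mul, sub_neg_eq_add, Matrix.mul_assoc]
      _ = 1 := by rw [hC1, Matrix.mul_one]; abel
  have hBinv : B⁻¹ = S := inv_eq_right_inv hBS
  -- the right-hand side
  set M := A⁻¹ - A⁻¹ * Uk * C⁻¹ * Ukᴴ * A⁻¹ with hMdef
  have hMk : Ukᴴ * M * Uk = 0 := by
    have : Ukᴴ * M * Uk = C - C * C⁻¹ * C := by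
      simp only [hMdef, Matrix.mul_sub, Matrix.sub_mul, hCdef, Matrix.mul_assoc]
    rw [this, hC1, Matrix.one_mul, sub_self]
  have hMkl : Ukᴴ * M * Ul = 0 := by
    have : Ukᴴ * M * Ul = Ukᴴ * A⁻¹ * Ul - C * C⁻¹ * (Ukᴴ * A⁻¹ * Ul) := by
      simp only [hMdef, Matrix.mul_sub, Matrix.sub_mul, hCdef, Matrix.mul_assoc]
    rw [this, hC1, Matrix.one_mul, sub_self]
  have hMlk : Ulᴴ * M * Uk = 0 := by
    have : Ulᴴ * M * Uk = Ulᴴ * A⁻¹ * Uk - Ulᴴ * A⁻¹ * Uk * (C⁻¹ * C) := by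
      simp only [hMdef, Matrix.mul_sub, Matrix.sub_mul, hCdef, Matrix.mul_assoc]
    rw [this, hC2, Matrix.mul_one, sub_self]
  have hMll : Ulᴴ * M * Ul = S := by
    simp only [hMdef, hSdef, Matrix.mul_sub, Matrix.sub_mul, Matrix.mul_assoc]
  have key : Uᴴ * M * U = fromBlocks 0 0 0 B⁻¹ := by
    rw [hUH, hUc, fromRows_mul, fromRows_mul_fromCols, hMk, hMkl, hMlk, hMll, hBinv]
  calc U * fromBlocks (0 : Matrix (Fin k) (Fin k) ℂ) 0 0 B⁻¹ * Uᴴ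
      = U * (Uᴴ * M * U) * Uᴴ := by rw [key]
    _ = (U * Uᴴ) * M * (U * Uᴴ) := by simp only [Matrix.mul_assoc]
    _ = M := by rw [hUUH, Matrix.one_mul, Matrix.mul_one]
end

section
/- Let A ∈ M_n(ℂ) with Re A := (A+A*)/2 positive definite, and U_k ∈ ℂ^{n×k} with U_k* U_k = 1_k. Then ‖A^{-1} U_k (U_k* A^{-1} U_k)^{-1} U_k* A^{-1}‖ ≤ ‖(Re A)^{-1}‖. -/
open Matrix
open scoped ComplexOrder

section Stmt3Helpers

variable {m p : ℕ}

lemma stmt3_quad_conj (B : Matrix (Fin m) (Fin m) ℂ) (y : Fin m → ℂ) :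
    star y ⬝ᵥ (Bᴴ *ᵥ y) = star (star y ⬝ᵥ (B *ᵥ y)) := by
  rw [star_dotProduct, star_mulVec, conjTranspose_conjTranspose, ← dotProduct_mulVec]

lemma stmt3_dot_shift (C : Matrix (Fin m) (Fin p) ℂ) (y : Fin p → ℂ) (w : Fin m → ℂ) :
    star (C *ᵥ y) ⬝ᵥ w = star y ⬝ᵥ (Cᴴ *ᵥ w) := by
  rw [star_mulVec, ← dotProduct_mulVec]

lemma stmt3_quad_eq (C : Matrix (Fin m) (Fin p) ℂ) (Hm : Matrix (Fin m) (Fin m) ℂ)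
    (y : Fin p → ℂ) :
    star (C *ᵥ y) ⬝ᵥ (Hm *ᵥ (C *ᵥ y)) = star y ⬝ᵥ ((Cᴴ * Hm * C) *ᵥ y) := by
  rw [stmt3_dot_shift, mulVec_mulVec, mulVec_mulVec]

lemma stmt3_isUnit_of_posdef_re {B : Matrix (Fin m) (Fin m) ℂ}
    (h : ((1 / 2 : ℂ) • (B + Bᴴ)).PosDef) : IsUnit B := by
  rw [← Matrix.mulVec_injective_iff_isUnit]
  have key : ∀ v, B *ᵥ v = 0 → v = 0 := by
    intro v hv
    by_contra h0
    have hp := h.dotProduct_mulVec_pos h0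
    rw [smul_mulVec, add_mulVec, hv, zero_add, dotProduct_smul,
      stmt3_quad_conj, hv, dotProduct_zero, star_zero, smul_zero] at hp
    exact lt_irrefl 0 hp
  intro u v huv
  have : B *ᵥ (u - v) = 0 := by rw [mulVec_sub, huv, sub_self]
  exact sub_eq_zero.mp (key _ this)

open RCLike MatrixOrder in
lemma stmt3_sq_norm_le {m : ℕ} {Hm : Matrix (Fin m) (Fin m) ℂ} (hHm : Hm.PosDef)
    (q : Fin m → ℂ) :
    ‖(WithLp.equiv 2 (Fin m → ℂ)).symm q‖ ^ 2
      ≤ ‖Matrix.toEuclideanCLM (𝕜 := ℂ) Hm⁻¹‖ * re (star q ⬝ᵥ (Hm *ᵥ q)) := by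
  have hHinv : Hm⁻¹.PosDef := hHm.inv
  set S := CFC.sqrt Hm⁻¹ with hSdef
  have hS2 : S * S = Hm⁻¹ := CFC.sqrt_mul_sqrt_self _ hHinv.posSemidef.nonneg
  have hSherm : Sᴴ = S := (CFC.sqrt_nonneg Hm⁻¹).posSemidef.isHermitian
  have hSdet : IsUnit S.det := by
    have h1 : IsUnit (S * S) := hS2 ▸ hHinv.isUnit
    have h2 := (Matrix.isUnit_iff_isUnit_det _).mp h1
    rw [Matrix.det_mul] at h2
    exact isUnit_of_mul_isUnit_left h2
  have hHmeq : Hm = S⁻¹ * S⁻¹ := by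
    rw [← Matrix.mul_inv_rev, hS2,
      Matrix.nonsing_inv_nonsing_inv _ ((Matrix.isUnit_iff_isUnit_det _).mp hHm.isUnit)]
  have hSHS : S * Hm * S = 1 := by
    rw [hHmeq, Matrix.mul_assoc, Matrix.mul_assoc, Matrix.nonsing_inv_mul _ hSdet,
      Matrix.mul_one, Matrix.mul_nonsing_inv _ hSdet]
  set p : Fin m → ℂ := S⁻¹ *ᵥ q with hp
  have hq : q = S *ᵥ p := by
    rw [hp, mulVec_mulVec, Matrix.mul_nonsing_inv _ hSdet, one_mulVec]
  have h1 : Matrix.toEuclideanCLM (𝕜 := ℂ) S ((WithLp.equiv 2 _).symm p)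
      = (WithLp.equiv 2 _).symm q := by
    rw [WithLp.equiv_symm_apply, Matrix.toEuclideanCLM_toLp, ← hq]
  have hnormS : ‖Matrix.toEuclideanCLM (𝕜 := ℂ) S‖ ^ 2
      = ‖Matrix.toEuclideanCLM (𝕜 := ℂ) Hm⁻¹‖ := by
    have := CStarRing.norm_star_mul_self (x := Matrix.toEuclideanCLM (𝕜 := ℂ) S)
    rw [← map_star, Matrix.star_eq_conjTranspose, hSherm, ← _root_.map_mul, hS2] at this
    rw [sq, ← this]
  have hpn : ‖(WithLp.equiv 2 (Fin m → ℂ)).symm p‖ ^ 2 = re (star q ⬝ᵥ (Hm *ᵥ q)) := by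
    rw [← inner_self_eq_norm_sq (𝕜 := ℂ), WithLp.equiv_symm_apply, EuclideanSpace.inner_toLp_toLp,
      dotProduct_comm]
    congr 1
    rw [hq, stmt3_quad_eq, hSherm, hSHS, one_mulVec]
  calc ‖(WithLp.equiv 2 (Fin m → ℂ)).symm q‖ ^ 2
      = ‖Matrix.toEuclideanCLM (𝕜 := ℂ) S ((WithLp.equiv 2 _).symm p)‖ ^ 2 := by rw [h1]
    _ ≤ (‖Matrix.toEuclideanCLM (𝕜 := ℂ) S‖ * ‖(WithLp.equiv 2 (Fin m → ℂ)).symm p‖) ^ 2 := by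
        have := ContinuousLinearMap.le_opNorm (Matrix.toEuclideanCLM (𝕜 := ℂ) S)
          ((WithLp.equiv 2 _).symm p)
        exact pow_le_pow_left₀ (norm_nonneg _) this 2
    _ = ‖Matrix.toEuclideanCLM (𝕜 := ℂ) S‖ ^ 2 * ‖(WithLp.equiv 2 (Fin m → ℂ)).symm p‖ ^ 2 := by
        ring
    _ = ‖Matrix.toEuclideanCLM (𝕜 := ℂ) Hm⁻¹‖ * re (star q ⬝ᵥ (Hm *ᵥ q)) := by
        rw [hnormS, hpn]

open RCLike

/-- If `Re A = (A + Aᴴ)/2` is positive definite and `U_k` has orthonormal columns, then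
`‖A⁻¹ U_k (U_kᴴ A⁻¹ U_k)⁻¹ U_kᴴ A⁻¹‖ ≤ ‖(Re A)⁻¹‖` in operator norm. -/
theorem stmt_3 (n k : ℕ) (A : Matrix (Fin n) (Fin n) ℂ)
    (hRe : ((1 / 2 : ℂ) • (A + Aᴴ)).PosDef)
    (Uk : Matrix (Fin n) (Fin k) ℂ) (hUk : Ukᴴ * Uk = 1) :
    ‖Matrix.toEuclideanCLM (𝕜 := ℂ) (A⁻¹ * Uk * (Ukᴴ * A⁻¹ * Uk)⁻¹ * Ukᴴ * A⁻¹)‖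
      ≤ ‖Matrix.toEuclideanCLM (𝕜 := ℂ) (((1 / 2 : ℂ) • (A + Aᴴ))⁻¹)‖ := by
  set H := (1 / 2 : ℂ) • (A + Aᴴ) with hHdef
  have hAu : IsUnit A := stmt3_isUnit_of_posdef_re hRe
  have hAdet : IsUnit A.det := (Matrix.isUnit_iff_isUnit_det _).mp hAu
  have hAHdet : IsUnit Aᴴ.det := by
    rw [Matrix.det_conjTranspose]; exact hAdet.star
  have c1 : A * A⁻¹ = 1 := Matrix.mul_nonsing_inv _ hAdet
  have c2 : A⁻¹ * A = 1 := Matrix.nonsing_inv_mul _ hAdet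
  have c3 : Aᴴ * Aᴴ⁻¹ = 1 := Matrix.mul_nonsing_inv _ hAHdet
  have c4 : Aᴴ⁻¹ * Aᴴ = 1 := Matrix.nonsing_inv_mul _ hAHdet
  set M := Ukᴴ * A⁻¹ * Uk with hMdef
  have hMherm : Mᴴ = Ukᴴ * Aᴴ⁻¹ * Uk := by
    rw [hMdef, conjTranspose_mul, conjTranspose_mul, conjTranspose_conjTranspose,
      Matrix.conjTranspose_nonsing_inv, ← Matrix.mul_assoc]
  have hmid1 : Aᴴ⁻¹ * H * A⁻¹ = (1 / 2 : ℂ) • (Aᴴ⁻¹ + A⁻¹) := by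
    rw [hHdef, Matrix.mul_smul, Matrix.smul_mul]
    congr 1
    rw [Matrix.mul_add, Matrix.add_mul, c4, Matrix.one_mul, Matrix.mul_assoc, c1,
      Matrix.mul_one]
  have hmid2 : A⁻¹ * H * Aᴴ⁻¹ = (1 / 2 : ℂ) • (Aᴴ⁻¹ + A⁻¹) := by
    rw [hHdef, Matrix.mul_smul, Matrix.smul_mul]
    congr 1
    rw [Matrix.mul_add, Matrix.add_mul, c2, Matrix.one_mul, Matrix.mul_assoc, c3,
      Matrix.mul_one]
  have hN1 : (A⁻¹ * Uk)ᴴ * H * (A⁻¹ * Uk) = (1 / 2 : ℂ) • (M + Mᴴ) := by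
    rw [conjTranspose_mul, Matrix.conjTranspose_nonsing_inv]
    have hassoc : Ukᴴ * Aᴴ⁻¹ * H * (A⁻¹ * Uk) = Ukᴴ * (Aᴴ⁻¹ * H * A⁻¹) * Uk := by
      simp only [Matrix.mul_assoc]
    rw [hassoc, hmid1, Matrix.mul_smul, Matrix.smul_mul]
    congr 1
    rw [Matrix.mul_add, Matrix.add_mul, ← hMdef, ← hMherm, add_comm]
  have hN2 : (Aᴴ⁻¹ * Uk)ᴴ * H * (Aᴴ⁻¹ * Uk) = (1 / 2 : ℂ) • (M + Mᴴ) := by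
    rw [conjTranspose_mul, Matrix.conjTranspose_nonsing_inv, conjTranspose_conjTranspose]
    have hassoc : Ukᴴ * A⁻¹ * H * (Aᴴ⁻¹ * Uk) = Ukᴴ * (A⁻¹ * H * Aᴴ⁻¹) * Uk := by
      simp only [Matrix.mul_assoc]
    rw [hassoc, hmid2, Matrix.mul_smul, Matrix.smul_mul]
    congr 1
    rw [Matrix.mul_add, Matrix.add_mul, ← hMdef, ← hMherm, add_comm]
  have hNpos : ((1 / 2 : ℂ) • (M + Mᴴ)).PosDef := by
    refine Matrix.PosDef.of_dotProduct_mulVec_pos ?_ ?_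
    · show ((1 / 2 : ℂ) • (M + Mᴴ))ᴴ = _
      rw [conjTranspose_smul, conjTranspose_add, conjTranspose_conjTranspose]
      rw [show star (1 / 2 : ℂ) = (1 / 2 : ℂ) by norm_num [Complex.ext_iff]]
      rw [add_comm]
    · intro y hy
      rw [← hN2, ← stmt3_quad_eq]
      apply hRe.dotProduct_mulVec_pos
      intro hCy
      apply hy
      have hUky : Uk *ᵥ y = 0 := by
        have h0 : Aᴴ *ᵥ ((Aᴴ⁻¹ * Uk) *ᵥ y) = 0 := by rw [hCy, mulVec_zero]
        rwa [mulVec_mulVec, ← Matrix.mul_assoc, c3, Matrix.one_mul] at h0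
      have h1 := congrArg (fun w => Ukᴴ *ᵥ w) hUky
      simpa [mulVec_mulVec, hUk] using h1
  have hMu : IsUnit M := stmt3_isUnit_of_posdef_re hNpos
  have hMdet : IsUnit M.det := (Matrix.isUnit_iff_isUnit_det _).mp hMu
  apply ContinuousLinearMap.opNorm_le_bound _ (norm_nonneg _)
  intro x
  set L := ‖Matrix.toEuclideanCLM (𝕜 := ℂ) H⁻¹‖ with hLdef
  set x' : Fin n → ℂ := WithLp.equiv 2 (Fin n → ℂ) x with hx'
  set c : Fin k → ℂ := (M⁻¹ * (Ukᴴ * A⁻¹)) *ᵥ x' with hc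
  set q : Fin n → ℂ := (Aᴴ⁻¹ * Uk) *ᵥ c with hqdef
  set v : Fin n → ℂ := (A⁻¹ * Uk) *ᵥ c with hv
  set E := re (star q ⬝ᵥ (H *ᵥ q)) with hE
  have happ : Matrix.toEuclideanCLM (𝕜 := ℂ) (A⁻¹ * Uk * M⁻¹ * Ukᴴ * A⁻¹) x
      = (WithLp.equiv 2 (Fin n → ℂ)).symm v := by
    conv_lhs => rw [show x = (WithLp.equiv 2 (Fin n → ℂ)).symm x' by
      rw [hx']; exact (Equiv.symm_apply_apply _ _).symm]
    rw [WithLp.equiv_symm_apply, Matrix.toEuclideanCLM_toLp]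
    congr 1
    rw [hv, hc, mulVec_mulVec]
    congr 1
    simp only [Matrix.mul_assoc]
  have hEv : star v ⬝ᵥ (H *ᵥ v) = star c ⬝ᵥ (((1 / 2 : ℂ) • (M + Mᴴ)) *ᵥ c) := by
    rw [hv, stmt3_quad_eq, hN1]
  have hEq : star q ⬝ᵥ (H *ᵥ q) = star c ⬝ᵥ (((1 / 2 : ℂ) • (M + Mᴴ)) *ᵥ c) := by
    rw [hqdef, stmt3_quad_eq, hN2]
  have hMc : M *ᵥ c = (Ukᴴ * A⁻¹) *ᵥ x' := by
    rw [hc, mulVec_mulVec, ← Matrix.mul_assoc, Matrix.mul_nonsing_inv _ hMdet,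
      Matrix.one_mul]
  have hCH : (Aᴴ⁻¹ * Uk)ᴴ = Ukᴴ * A⁻¹ := by
    rw [conjTranspose_mul, Matrix.conjTranspose_nonsing_inv, conjTranspose_conjTranspose]
  have hz : star c ⬝ᵥ (M *ᵥ c) = star q ⬝ᵥ x' := by
    rw [hMc, hqdef, stmt3_dot_shift (Aᴴ⁻¹ * Uk) c x', hCH]
  have hrez : re (star c ⬝ᵥ (((1 / 2 : ℂ) • (M + Mᴴ)) *ᵥ c)) = re (star c ⬝ᵥ (M *ᵥ c)) := by
    rw [smul_mulVec, dotProduct_smul, add_mulVec, dotProduct_add, stmt3_quad_conj]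
    set z := star c ⬝ᵥ (M *ᵥ c) with hzdef
    rw [smul_eq_mul, RCLike.star_def, Complex.add_conj]
    have : (1 / 2 : ℂ) * ((2 * z.re : ℝ) : ℂ) = ((z.re : ℝ) : ℂ) := by push_cast; ring
    rw [this]
    simp [RCLike.re_to_complex]
  have hEz : E = re (star q ⬝ᵥ x') := by rw [hE, hEq, hrez, hz]
  have hqx : re (star q ⬝ᵥ x') ≤ ‖(WithLp.equiv 2 (Fin n → ℂ)).symm q‖ * ‖x‖ := by
    have h := re_inner_le_norm (𝕜 := ℂ) ((WithLp.equiv 2 (Fin n → ℂ)).symm q) x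
    rw [EuclideanSpace.inner_eq_star_dotProduct, dotProduct_comm] at h
    simpa [hx'] using h
  have hQ2 : ‖(WithLp.equiv 2 (Fin n → ℂ)).symm q‖ ^ 2 ≤ L * E := stmt3_sq_norm_le hRe q
  have hV2 : ‖(WithLp.equiv 2 (Fin n → ℂ)).symm v‖ ^ 2 ≤ L * E := by
    have h := stmt3_sq_norm_le hRe v
    rwa [hEv, ← hEq, ← hE] at h
  have hE0 : 0 ≤ E := hRe.posSemidef.re_dotProduct_nonneg q
  have hL0 : 0 ≤ L := norm_nonneg _
  have hEX : E ≤ ‖(WithLp.equiv 2 (Fin n → ℂ)).symm q‖ * ‖x‖ := hEz ▸ hqx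
  rw [happ]
  have hELX : E ≤ L * ‖x‖ ^ 2 := by
    rcases hE0.eq_or_lt with h | h
    · rw [← h]; positivity
    · have h4 : E * E ≤ (L * ‖x‖ ^ 2) * E := by
        calc E * E ≤ (‖(WithLp.equiv 2 (Fin n → ℂ)).symm q‖ * ‖x‖)
              * (‖(WithLp.equiv 2 (Fin n → ℂ)).symm q‖ * ‖x‖) :=
            mul_le_mul hEX hEX hE0 (by positivity)
          _ = ‖(WithLp.equiv 2 (Fin n → ℂ)).symm q‖ ^ 2 * ‖x‖ ^ 2 := by ring
          _ ≤ (L * E) * ‖x‖ ^ 2 := mul_le_mul_of_nonneg_right hQ2 (sq_nonneg _)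
          _ = (L * ‖x‖ ^ 2) * E := by ring
      exact le_of_mul_le_mul_right h4 h
  have hfin : ‖(WithLp.equiv 2 (Fin n → ℂ)).symm v‖ ^ 2 ≤ (L * ‖x‖) ^ 2 :=
    calc ‖(WithLp.equiv 2 (Fin n → ℂ)).symm v‖ ^ 2 ≤ L * E := hV2
      _ ≤ L * (L * ‖x‖ ^ 2) := mul_le_mul_of_nonneg_left hELX hL0
      _ = (L * ‖x‖) ^ 2 := by ring
  exact le_of_pow_le_pow_left₀ two_ne_zero (by positivity) hfin
end Stmt3Helpers
end

section
/- Let X ∈ M_n(ℂ), z ∈ ℂ, t > 0, N > 0, η_z = √(t/N), and suppose t·(1/N) tr H_z(η_z) < 1 where H_z(η) = (η² + X_z*X_z)^{-1}, X_z = X−z. Define φ_z(η) = η²/t − (1/N) tr log(η² + X_z*X_z). Then φ_z(η) − φ_z(η_z) ≥ −1/N for all η ≥ 0. -/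
open Matrix
open scoped ComplexOrder

section Aux

variable {n : ℕ} {A : Matrix (Fin n) (Fin n) ℂ} (hA : A.IsHermitian)

private lemma conj_key (x : ℝ) :
    (x : ℂ) • 1 + A =
      (hA.eigenvectorUnitary : Matrix (Fin n) (Fin n) ℂ) *
        diagonal (fun i => ((x + hA.eigenvalues i : ℝ) : ℂ)) *
        star (hA.eigenvectorUnitary : Matrix (Fin n) (Fin n) ℂ) := by
  set U := (hA.eigenvectorUnitary : Matrix (Fin n) (Fin n) ℂ)
  have h1 : U * star U = 1 := mem_unitaryGroup_iff.mp hA.eigenvectorUnitary.2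
  have hd : diagonal (fun i => ((x + hA.eigenvalues i : ℝ) : ℂ)) =
      (x : ℂ) • 1 + diagonal (RCLike.ofReal ∘ hA.eigenvalues) := by
    rw [smul_one_eq_diagonal, diagonal_add]
    congr 1
    ext i
    push_cast
    simp
  rw [hd, mul_add, add_mul]
  congr 1
  · rw [mul_smul_comm, smul_mul_assoc, mul_one, h1]
  · exact hA.spectral_theorem

private lemma det_key (x : ℝ) :
    ((x : ℂ) • 1 + A).det = ((∏ i, (x + hA.eigenvalues i) : ℝ) : ℂ) := by
  set U := (hA.eigenvectorUnitary : Matrix (Fin n) (Fin n) ℂ)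
  have h1 : U * star U = 1 := mem_unitaryGroup_iff.mp hA.eigenvectorUnitary.2
  rw [conj_key hA x, det_mul, det_mul]
  have : U.det * (diagonal (fun i => ((x + hA.eigenvalues i : ℝ) : ℂ))).det * (star U).det
      = (diagonal (fun i => ((x + hA.eigenvalues i : ℝ) : ℂ))).det * (U * star U).det := by
    rw [det_mul]; ring
  rw [this, h1, det_one, mul_one, det_diagonal]
  push_cast
  rfl

private lemma trace_key (x : ℝ) (hx : ∀ i, x + hA.eigenvalues i ≠ 0) :
    ((x : ℂ) • 1 + A)⁻¹.trace = ∑ i, (((x + hA.eigenvalues i : ℝ) : ℂ))⁻¹ := by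
  set U := (hA.eigenvectorUnitary : Matrix (Fin n) (Fin n) ℂ)
  have h1 : U * star U = 1 := mem_unitaryGroup_iff.mp hA.eigenvectorUnitary.2
  have h2 : star U * U = 1 := mem_unitaryGroup_iff'.mp hA.eigenvectorUnitary.2
  set D := diagonal (fun i => ((x + hA.eigenvalues i : ℝ) : ℂ))
  set D' := diagonal (fun i => (((x + hA.eigenvalues i : ℝ) : ℂ))⁻¹)
  have hDD' : D * D' = 1 := by
    rw [diagonal_mul_diagonal]
    have hfun : (fun i => ((x + hA.eigenvalues i : ℝ) : ℂ) *
        (((x + hA.eigenvalues i : ℝ) : ℂ))⁻¹) = fun _ => (1 : ℂ) := by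
      funext i
      exact mul_inv_cancel₀ (by exact_mod_cast hx i)
    rw [hfun, diagonal_one]
  have hinv : ((x : ℂ) • 1 + A)⁻¹ = U * D' * star U := by
    apply inv_eq_right_inv
    rw [conj_key hA x]
    calc U * D * star U * (U * D' * star U)
        = U * (D * ((star U * U) * D')) * star U := by
          simp only [Matrix.mul_assoc]
      _ = 1 := by rw [h2, Matrix.one_mul, hDD', Matrix.mul_one, h1]
  rw [hinv, trace_mul_cycle, h2, Matrix.one_mul, trace_diagonal]

end Aux

/-- If `η_z = √(t/N)` and `t · (1/N) tr H_z(η_z) < 1`, then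
`φ_z(η) − φ_z(η_z) ≥ −1/N` for all `η ≥ 0`, where
`φ_z(η) = η²/t − (1/N) tr log(η² + X_zᴴX_z)` (here `tr log = log det`). -/
theorem stmt_8 (n N : ℕ) (hN : 0 < N)
    (X : Matrix (Fin n) (Fin n) ℂ) (z : ℂ) (t : ℝ) (ht : 0 < t)
    (hpd : ((X - z • 1)ᴴ * (X - z • 1)).PosDef)
    (ηz : ℝ) (hηz : ηz = Real.sqrt (t / N))
    (hfix : t * ((N : ℝ)⁻¹ *
        ((((ηz : ℂ) ^ 2 • 1 + (X - z • 1)ᴴ * (X - z • 1))⁻¹ :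
            Matrix (Fin n) (Fin n) ℂ).trace).re) < 1)
    (η : ℝ) (hη : 0 ≤ η) :
    (η ^ 2 / t
        - (N : ℝ)⁻¹ * Real.log (((η : ℂ) ^ 2 • 1 + (X - z • 1)ᴴ * (X - z • 1)).det.re))
      - (ηz ^ 2 / t
        - (N : ℝ)⁻¹ * Real.log (((ηz : ℂ) ^ 2 • 1 + (X - z • 1)ᴴ * (X - z • 1)).det.re))
      ≥ -(1 / N : ℝ) := by
  set A := (X - z • 1)ᴴ * (X - z • 1) with hA_def
  have hA : A.IsHermitian := hpd.1
  set μ := hA.eigenvalues with hμ_def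
  have hμpos : ∀ i, 0 < μ i := fun i => hpd.eigenvalues_pos i
  have hNpos : (0 : ℝ) < N := by exact_mod_cast hN
  have hb : ηz ^ 2 = t / N := by
    rw [hηz, Real.sq_sqrt (le_of_lt (div_pos ht hNpos))]
  have hbpos : 0 < ηz ^ 2 := hb ▸ div_pos ht hNpos
  have hapos : (0:ℝ) ≤ η ^ 2 := sq_nonneg η
  -- rewrite casts: (η:ℂ)^2 = ((η^2:ℝ):ℂ)
  have hcast : ∀ y : ℝ, (y : ℂ) ^ 2 = ((y ^ 2 : ℝ) : ℂ) := by intro y; push_cast; ring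
  -- positivity of shifted eigenvalues
  have hbμ : ∀ i, 0 < ηz ^ 2 + μ i := fun i => add_pos hbpos (hμpos i)
  have haμ : ∀ i, 0 < η ^ 2 + μ i := fun i => add_pos_of_nonneg_of_pos hapos (hμpos i)
  -- determinant real parts
  have hdet : ∀ y : ℝ, (((y : ℂ) ^ 2 • 1 + A).det).re = ∏ i, (y ^ 2 + μ i) := by
    intro y
    rw [hcast y, det_key hA]
    exact Complex.ofReal_re _
  -- trace rewriting in hfix
  have htr : ((((ηz : ℂ) ^ 2 • 1 + A)⁻¹).trace).re = ∑ i, (ηz ^ 2 + μ i)⁻¹ := by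
    rw [hcast ηz, trace_key hA _ (fun i => ne_of_gt (hbμ i))]
    rw [Complex.re_sum]
    congr 1
    ext i
    rw [← Complex.ofReal_inv]
    exact Complex.ofReal_re _
  rw [htr] at hfix
  rw [hdet η, hdet ηz]
  set S := ∑ i, (ηz ^ 2 + μ i)⁻¹ with hS_def
  have hSnonneg : 0 ≤ S := Finset.sum_nonneg fun i _ => le_of_lt (inv_pos.mpr (hbμ i))
  -- log of products
  have hlogp : ∀ (f : Fin n → ℝ), (∀ i, 0 < f i) →
      Real.log (∏ i, f i) = ∑ i, Real.log (f i) := by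
    intro f hf
    exact Real.log_prod (fun i _ => ne_of_gt (hf i))
  rw [hlogp _ haμ, hlogp _ hbμ]
  -- per-term log bound
  have hterm : ∀ i, Real.log (η ^ 2 + μ i) - Real.log (ηz ^ 2 + μ i)
      ≤ (η ^ 2 - ηz ^ 2) * (ηz ^ 2 + μ i)⁻¹ := by
    intro i
    have h1 : Real.log ((η ^ 2 + μ i) / (ηz ^ 2 + μ i)) ≤ (η ^ 2 + μ i) / (ηz ^ 2 + μ i) - 1 :=
      Real.log_le_sub_one_of_pos (div_pos (haμ i) (hbμ i))
    rw [Real.log_div (ne_of_gt (haμ i)) (ne_of_gt (hbμ i))] at h1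
    have h2 : (η ^ 2 + μ i) / (ηz ^ 2 + μ i) - 1 = (η ^ 2 - ηz ^ 2) * (ηz ^ 2 + μ i)⁻¹ := by
      rw [div_sub_one (ne_of_gt (hbμ i)), div_eq_mul_inv]
      ring
    rw [h2] at h1
    exact h1
  have hsum : ∑ i, Real.log (η ^ 2 + μ i) - ∑ i, Real.log (ηz ^ 2 + μ i)
      ≤ (η ^ 2 - ηz ^ 2) * S := by
    rw [← Finset.sum_sub_distrib, hS_def, Finset.mul_sum]
    exact Finset.sum_le_sum fun i _ => hterm i
  have hNinv : (0:ℝ) < (N:ℝ)⁻¹ := inv_pos.mpr hNpos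
  -- main estimate
  rcases le_or_gt (ηz ^ 2) (η ^ 2) with hcase | hcase
  · -- η² ≥ ηz²: (η²−ηz²)(1/t − S/N) ≥ 0
    have hkey : (N:ℝ)⁻¹ * S < 1 / t := by
      rw [lt_div_iff₀ ht]; linarith [hfix]
    have : (η ^ 2 - ηz ^ 2) * ((N:ℝ)⁻¹ * S) ≤ (η ^ 2 - ηz ^ 2) * (1 / t) :=
      mul_le_mul_of_nonneg_left (le_of_lt hkey) (by linarith)
    have hmul : (N:ℝ)⁻¹ * ((η ^ 2 - ηz ^ 2) * S) ≤ η ^ 2 / t - ηz ^ 2 / t := by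
      calc (N:ℝ)⁻¹ * ((η ^ 2 - ηz ^ 2) * S) = (η ^ 2 - ηz ^ 2) * ((N:ℝ)⁻¹ * S) := by ring
        _ ≤ (η ^ 2 - ηz ^ 2) * (1 / t) := this
        _ = η ^ 2 / t - ηz ^ 2 / t := by ring
    have hlog : (N:ℝ)⁻¹ * (∑ i, Real.log (η ^ 2 + μ i) - ∑ i, Real.log (ηz ^ 2 + μ i))
        ≤ η ^ 2 / t - ηz ^ 2 / t := le_trans
        (mul_le_mul_of_nonneg_left hsum (le_of_lt hNinv)) hmul
    rw [mul_sub] at hlog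
    have h1N : (0:ℝ) < 1 / N := by positivity
    linarith [hlog, h1N]
  · -- η² < ηz²
    have hd : η ^ 2 - ηz ^ 2 < 0 := by linarith
    have hdS : (η ^ 2 - ηz ^ 2) * S ≤ 0 := mul_nonpos_of_nonpos_of_nonneg (le_of_lt hd) hSnonneg
    have hlog : (N:ℝ)⁻¹ * (∑ i, Real.log (η ^ 2 + μ i) - ∑ i, Real.log (ηz ^ 2 + μ i)) ≤ 0 :=
      mul_nonpos_of_nonneg_of_nonpos (le_of_lt hNinv) (le_trans hsum hdS)
    have hlb : -(1 / N : ℝ) ≤ η ^ 2 / t - ηz ^ 2 / t := by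
      have h0 : -(1 / N : ℝ) = (0 - ηz ^ 2) / t := by
        rw [hb]
        field_simp
        ring
      rw [h0, sub_div, zero_div]
      have hpos : 0 ≤ η ^ 2 / t := by positivity
      linarith
    rw [mul_sub] at hlog
    linarith [hlog, hlb]
end
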